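/- For all integers r ≥ 4 and n with r ≤ n ≤ r+4, every n-vertex connected BP_4-free r-uniform hypergraph has at most 4 hyperedges. -/
import Mathlib


namespace Berge

def IsBergePath {n : ℕ} (E : Finset (Finset (Fin n))) (k : ℕ)
    (v : Fin (k + 1) → Fin n) (f : Fin k → Finset (Fin n)) : Prop :=
  Function.Injective v ∧ Function.Injective f ∧ (∀ i, f i ∈ E) ∧
    ∀ i : Fin k, v i.castSucc ∈ f i ∧ v i.succ ∈ f i

def HasBergePath {n : ℕ} (E : Finset (Finset (Fin n))) (k : ℕ) : Prop :=
  ∃ v f, IsBergePath E k v f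

def BPFree {n : ℕ} (E : Finset (Finset (Fin n))) (k : ℕ) : Prop :=
  ¬ HasBergePath E k

def Connected {n : ℕ} (E : Finset (Finset (Fin n))) : Prop :=
  ∀ x y : Fin n, ∃ (k : ℕ) (v : Fin (k + 1) → Fin n) (f : Fin k → Finset (Fin n)),
    IsBergePath E k v f ∧ (∃ i, v i = x) ∧ (∃ i, v i = y)

def Uniform {n : ℕ} (E : Finset (Finset (Fin n))) (r : ℕ) : Prop :=
  ∀ e ∈ E, e.card = r

noncomputable def exConn (n r k : ℕ) : ℕ :=
  sSup {m | ∃ E : Finset (Finset (Fin n)),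
    Uniform E r ∧ Connected E ∧ BPFree E k ∧ E.card = m}

def IsBergeCycle {n : ℕ} (E : Finset (Finset (Fin n))) (k : ℕ)
    (v : Fin k → Fin n) (f : Fin k → Finset (Fin n)) : Prop :=
  Function.Injective v ∧ Function.Injective f ∧ (∀ i, f i ∈ E) ∧
    ∀ i : Fin k, v i ∈ f i ∧ v ⟨(i.val + 1) % k, Nat.mod_lt _ i.pos⟩ ∈ f i



open Finset

lemma inj5 {α : Type*} {v1 v2 v3 v4 v5 : α}
    (h12 : v1 ≠ v2) (h13 : v1 ≠ v3) (h14 : v1 ≠ v4) (h15 : v1 ≠ v5)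
    (h23 : v2 ≠ v3) (h24 : v2 ≠ v4) (h25 : v2 ≠ v5)
    (h34 : v3 ≠ v4) (h35 : v3 ≠ v5) (h45 : v4 ≠ v5) :
    Function.Injective ![v1, v2, v3, v4, v5] := by
  intro i j hij
  fin_cases i <;> fin_cases j <;> simp_all

lemma inj4 {α : Type*} {a b c d : α}
    (hab : a ≠ b) (hac : a ≠ c) (had : a ≠ d)
    (hbc : b ≠ c) (hbd : b ≠ d) (hcd : c ≠ d) :
    Function.Injective ![a, b, c, d] := by
  intro i j hij
  fin_cases i <;> fin_cases j <;> simp_all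


variable {n r : ℕ}

lemma eqU {X U : Finset (Fin n)} (h : X ⊆ U) (h2 : U.card ≤ 2) (h3 : 2 ≤ X.card) : X = U :=
  Finset.eq_of_subset_of_card_le h (by omega)

lemma card_inter_ge (x y : Finset (Fin n)) : x.card + y.card ≤ (x ∩ y).card + n := by
  have h1 := Finset.card_union_add_card_inter x y
  have h2 : (x ∪ y).card ≤ n := by simpa using Finset.card_le_univ (x ∪ y)
  omega

lemma triFalse (hr : 4 ≤ r) (hn2 : n ≤ r + 4) {x y z : Finset (Fin n)}
    (hcx : x.card = r) (hcy : y.card = r) (hcz : z.card = r)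
    (bxy : (x ∩ y).card ≤ 1) (bxz : (x ∩ z).card ≤ 1) (byz : (y ∩ z).card ≤ 1) : False := by
  have h1 := Finset.card_union_add_card_inter x y
  have h2 := Finset.card_union_add_card_inter (x ∪ y) z
  have h3 : (x ∪ y) ∩ z = (x ∩ z) ∪ (y ∩ z) := Finset.union_inter_distrib_right x y z
  have h4 : ((x ∪ y) ∩ z).card ≤ (x ∩ z).card + (y ∩ z).card := by
    rw [h3]; exact Finset.card_union_le _ _
  have h5 : ((x ∪ y) ∪ z).card ≤ n := by simpa using Finset.card_le_univ ((x ∪ y) ∪ z)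
  omega


lemma sdr3 {X Y Z : Finset (Fin n)} (hX : 2 ≤ X.card) (hY : 2 ≤ Y.card)
    (hZ : Z.Nonempty) (hU : 3 ≤ (X ∪ Y ∪ Z).card) :
    ∃ x ∈ X, ∃ y ∈ Y, ∃ z ∈ Z, x ≠ y ∧ x ≠ z ∧ y ≠ z := by
  obtain ⟨z, hz⟩ := hZ
  by_cases h : ∃ x ∈ X.erase z, ∃ y ∈ Y.erase z, x ≠ y
  · obtain ⟨x, hx, y, hy, hxy⟩ := h
    exact ⟨x, Finset.mem_of_mem_erase hx, y, Finset.mem_of_mem_erase hy, z, hz,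
      hxy, Finset.ne_of_mem_erase hx, Finset.ne_of_mem_erase hy⟩
  · push_neg at h
    have hX1 : (X.erase z).Nonempty := by
      rw [← Finset.card_pos]
      have := Finset.card_erase_lt_of_mem (s := X) (a := z)
      have h2 : X.card - 1 ≤ (X.erase z).card := Finset.pred_card_le_card_erase
      omega
    have hY1 : (Y.erase z).Nonempty := by
      rw [← Finset.card_pos]
      have h2 : Y.card - 1 ≤ (Y.erase z).card := Finset.pred_card_le_card_erase
      omega
    obtain ⟨w, hw⟩ := hX1
    obtain ⟨y0, hy0⟩ := hY1
    have hwy : w = y0 := h w hw y0 hy0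
    subst hwy
    have hwz : w ≠ z := Finset.ne_of_mem_erase hw
    have hXsub : X ⊆ {z, w} := by
      intro a ha
      by_cases haz : a = z
      · simp [haz]
      · have : a ∈ X.erase z := Finset.mem_erase.2 ⟨haz, ha⟩
        have := h a this w hy0
        simp [this]
    have hYsub : Y ⊆ {z, w} := by
      intro a ha
      by_cases haz : a = z
      · simp [haz]
      · have ha' : a ∈ Y.erase z := Finset.mem_erase.2 ⟨haz, ha⟩
        have := (h w hw a ha').symm
        simp [this]
    have hcard2 : ({z, w} : Finset (Fin n)).card ≤ 2 := Finset.card_insert_le _ _ |>.trans (by simp)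
    have hnotsub : ¬ (X ∪ Y ∪ Z ⊆ {z, w}) := by
      intro hsub
      have := Finset.card_le_card hsub
      omega
    obtain ⟨c, hc, hc2⟩ := Finset.not_subset.1 hnotsub
    have hcZ : c ∈ Z := by
      rcases Finset.mem_union.1 hc with h' | h'
      · rcases Finset.mem_union.1 h' with h'' | h''
        · exact absurd (hXsub h'') hc2
        · exact absurd (hYsub h'') hc2
      · exact h'
    have hwX : w ∈ X := Finset.mem_of_mem_erase hw
    have hzX : z ∈ X := by
      by_contra hzX
      have : X ⊆ {w} := by
        intro a ha
        have := hXsub ha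
        rcases Finset.mem_insert.1 this with h' | h'
        · exact absurd (h' ▸ ha) hzX
        · exact h'
      have := Finset.card_le_card this
      simp at this; omega
    have hzY : z ∈ Y := by
      by_contra hzY
      have : Y ⊆ {w} := by
        intro a ha
        have := hYsub ha
        rcases Finset.mem_insert.1 this with h' | h'
        · exact absurd (h' ▸ ha) hzY
        · exact h'
      have := Finset.card_le_card this
      simp at this; omega
    have hyz : w ∈ Y := Finset.mem_of_mem_erase hy0
    refine ⟨w, hwX, z, hzY, c, hcZ, hwz, ?_, ?_⟩
    · intro h'; exact hc2 (by simp [h'])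
    · intro h'; exact hc2 (by simp [h'])


lemma pathM {E : Finset (Finset (Fin n))} (hr : 4 ≤ r)
    {a b c d : Finset (Fin n)} (ha : a ∈ E) (hb : b ∈ E) (hc : c ∈ E) (hd : d ∈ E)
    (hab : a ≠ b) (hac : a ≠ c) (had : a ≠ d) (hbc : b ≠ c) (hbd : b ≠ d) (hcd : c ≠ d)
    (hca : a.card = r) (hcd' : d.card = r)
    {v2 v3 v4 : Fin n} (h2 : v2 ∈ a ∩ b) (h3 : v3 ∈ b ∩ c) (h4 : v4 ∈ c ∩ d)
    (h23 : v2 ≠ v3) (h24 : v2 ≠ v4) (h34 : v3 ≠ v4) :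
    HasBergePath E 4 := by
  classical
  set S : Finset (Fin n) := {v2, v3, v4} with hS
  have hScard : S.card ≤ 3 := by
    apply (Finset.card_insert_le _ _).trans
    have : ({v3, v4} : Finset (Fin n)).card ≤ 2 := (Finset.card_insert_le _ _).trans (by simp)
    omega
  have key : ∀ x : Finset (Fin n), x.card = r → (x \ S).Nonempty := by
    intro x hx
    rw [← Finset.card_pos]
    have := Finset.card_le_card_sdiff_add_card (s := x) (t := S)
    omega
  have hsub4 : ∀ (x : Finset (Fin n)) (u : Fin n), x.card = r → x \ S ⊆ {u} → x = insert u S := by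
    intro x u hx hsub
    have hxsub : x ⊆ insert u S := by
      intro t ht
      by_cases htS : t ∈ S
      · exact Finset.mem_insert_of_mem htS
      · have h' : t ∈ x \ S := Finset.mem_sdiff.2 ⟨ht, htS⟩
        have := hsub h'
        simp only [Finset.mem_singleton] at this
        simp [this]
    have hcard : (insert u S).card ≤ x.card := by
      have := Finset.card_insert_le u S
      omega
    exact Finset.eq_of_subset_of_card_le hxsub hcard
  obtain ⟨u, hu⟩ := key a hca
  have hmain : ∃ w1, w1 ∈ a \ S ∧ ∃ w5, w5 ∈ d \ S ∧ w1 ≠ w5 := by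
    by_cases hw : ∃ w ∈ d \ S, w ≠ u
    · obtain ⟨w, hw1, hw2⟩ := hw
      exact ⟨u, hu, w, hw1, fun h => hw2 h.symm⟩
    · push_neg at hw
      have hdsub : d \ S ⊆ {u} := fun t ht => Finset.mem_singleton.2 (hw t ht)
      have hdeq : d = insert u S := hsub4 d u hcd' hdsub
      have hud : u ∈ d \ S := by
        obtain ⟨w, hw1⟩ := key d hcd'
        have := hw w hw1
        exact this ▸ hw1
      by_cases hx : ∃ x ∈ a \ S, x ≠ u
      · obtain ⟨x, hx1, hx2⟩ := hx
        exact ⟨x, hx1, u, hud, hx2⟩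
      · push_neg at hx
        have hasub : a \ S ⊆ {u} := fun t ht => Finset.mem_singleton.2 (hx t ht)
        have haeq : a = insert u S := hsub4 a u hca hasub
        exact absurd (haeq.trans hdeq.symm) had
  obtain ⟨v1, hv1, v5, hv5, h15⟩ := hmain
  rw [Finset.mem_sdiff] at hv1 hv5
  have hv1S := hv1.2
  have hv5S := hv5.2
  simp only [hS, Finset.mem_insert, Finset.mem_singleton, not_or] at hv1S hv5S
  obtain ⟨h12, h13, h14⟩ := hv1S
  obtain ⟨h52, h53, h54⟩ := hv5S
  rw [Finset.mem_inter] at h2 h3 h4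
  refine ⟨![v1, v2, v3, v4, v5], ![a, b, c, d],
    inj5 h12 h13 h14 h15 h23 h24 (fun h => h52 h.symm) h34 (fun h => h53 h.symm)
      (fun h => h54 h.symm),
    inj4 hab hac had hbc hbd hcd, ?_, ?_⟩
  · intro i; fin_cases i <;> simpa
  · intro i
    fin_cases i
    · exact ⟨hv1.1, h2.1⟩
    · exact ⟨h2.2, h3.1⟩
    · exact ⟨h3.2, h4.1⟩
    · exact ⟨h4.2, hv5.1⟩


lemma nonem {X : Finset (Fin n)} (h : 2 ≤ X.card) : X.Nonempty := Finset.card_pos.mp (by omega)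

lemma applySdr {E : Finset (Finset (Fin n))} (hr : 4 ≤ r)
    {a b c d : Finset (Fin n)} (ha : a ∈ E) (hb : b ∈ E) (hc : c ∈ E) (hd : d ∈ E)
    (hab : a ≠ b) (hac : a ≠ c) (had : a ≠ d) (hbc : b ≠ c) (hbd : b ≠ d) (hcd : c ≠ d)
    (hca : a.card = r) (hcd' : d.card = r)
    (g1 : 2 ≤ (a ∩ b).card) (g2 : 2 ≤ (b ∩ c).card) (g3 : (c ∩ d).Nonempty)
    (hU : 3 ≤ ((a ∩ b) ∪ (b ∩ c) ∪ (c ∩ d)).card) : HasBergePath E 4 := by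
  obtain ⟨x, hx, y, hy, z, hz, hxy, hxz, hyz⟩ := sdr3 g1 g2 g3 hU
  exact pathM hr ha hb hc hd hab hac had hbc hbd hcd hca hcd' hx hy hz hxy hxz hyz


lemma L2 {E : Finset (Finset (Fin n))} (hr : 4 ≤ r) (hn2 : n ≤ r + 4)
    {a b c d : Finset (Fin n)} (ha : a ∈ E) (hb : b ∈ E) (hc : c ∈ E) (hd : d ∈ E)
    (hab : a ≠ b) (hac : a ≠ c) (had : a ≠ d) (hbc : b ≠ c) (hbd : b ≠ d) (hcd : c ≠ d)
    (hca : a.card = r) (hcb : b.card = r) (hcc : c.card = r) (hcd' : d.card = r)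
    (gab : 2 ≤ (a ∩ b).card) (gac : 2 ≤ (a ∩ c).card) (gad : 2 ≤ (a ∩ d).card)
    (gbc : 2 ≤ (b ∩ c).card) (gbd : 2 ≤ (b ∩ d).card) (gcd : 2 ≤ (c ∩ d).card) :
    HasBergePath E 4 := by
  have gba : 2 ≤ (b ∩ a).card := by rwa [Finset.inter_comm]
  have gdc : 2 ≤ (d ∩ c).card := by rwa [Finset.inter_comm]
  by_cases h1 : 3 ≤ ((a ∩ b) ∪ (b ∩ c) ∪ (c ∩ d)).card
  · exact applySdr hr ha hb hc hd hab hac had hbc hbd hcd hca hcd' gab gbc (nonem gcd) h1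
  push_neg at h1
  have hbcK : b ∩ c = a ∩ b := by
    have e1 : a ∩ b = (a ∩ b) ∪ (b ∩ c) ∪ (c ∩ d) :=
      eqU (Finset.subset_union_left.trans Finset.subset_union_left) (by omega) gab
    have e2 : b ∩ c = (a ∩ b) ∪ (b ∩ c) ∪ (c ∩ d) :=
      eqU (Finset.subset_union_right.trans Finset.subset_union_left) (by omega) gbc
    rw [e2, ← e1]
  have hcdK : c ∩ d = a ∩ b := by
    have e1 : a ∩ b = (a ∩ b) ∪ (b ∩ c) ∪ (c ∩ d) :=
      eqU (Finset.subset_union_left.trans Finset.subset_union_left) (by omega) gab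
    have e2 : c ∩ d = (a ∩ b) ∪ (b ∩ c) ∪ (c ∩ d) :=
      eqU Finset.subset_union_right (by omega) gcd
    rw [e2, ← e1]
  have hKcard : (a ∩ b).card = 2 := by
    have : (a ∩ b).card ≤ ((a ∩ b) ∪ (b ∩ c) ∪ (c ∩ d)).card :=
      Finset.card_le_card (Finset.subset_union_left.trans Finset.subset_union_left)
    omega
  by_cases h2 : 3 ≤ ((b ∩ a) ∪ (a ∩ c) ∪ (c ∩ d)).card
  · exact applySdr hr hb ha hc hd hab.symm hbc hbd hac had hcd hcb hcd' gba gac (nonem gcd) h2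
  push_neg at h2
  have hacK : a ∩ c = a ∩ b := by
    have e1 : b ∩ a = (b ∩ a) ∪ (a ∩ c) ∪ (c ∩ d) :=
      eqU (Finset.subset_union_left.trans Finset.subset_union_left) (by omega) gba
    have e2 : a ∩ c = (b ∩ a) ∪ (a ∩ c) ∪ (c ∩ d) :=
      eqU (Finset.subset_union_right.trans Finset.subset_union_left) (by omega) gac
    rw [e2, ← e1, Finset.inter_comm]
  by_cases h3 : 3 ≤ ((a ∩ b) ∪ (b ∩ d) ∪ (d ∩ c)).card
  · exact applySdr hr ha hb hd hc hab had hac hbd hbc hcd.symm hca hcc gab gbd (nonem gdc) h3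
  push_neg at h3
  have hbdK : b ∩ d = a ∩ b := by
    have e1 : a ∩ b = (a ∩ b) ∪ (b ∩ d) ∪ (d ∩ c) :=
      eqU (Finset.subset_union_left.trans Finset.subset_union_left) (by omega) gab
    have e2 : b ∩ d = (a ∩ b) ∪ (b ∩ d) ∪ (d ∩ c) :=
      eqU (Finset.subset_union_right.trans Finset.subset_union_left) (by omega) gbd
    rw [e2, ← e1]
  by_cases h4 : 3 ≤ ((b ∩ a) ∪ (a ∩ d) ∪ (d ∩ c)).card
  · exact applySdr hr hb ha hd hc hab.symm hbd hbc had hac hcd.symm hcb hcc gba gad (nonem gdc) h4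
  push_neg at h4
  have hadK : a ∩ d = a ∩ b := by
    have e1 : b ∩ a = (b ∩ a) ∪ (a ∩ d) ∪ (d ∩ c) :=
      eqU (Finset.subset_union_left.trans Finset.subset_union_left) (by omega) gba
    have e2 : a ∩ d = (b ∩ a) ∪ (a ∩ d) ∪ (d ∩ c) :=
      eqU (Finset.subset_union_right.trans Finset.subset_union_left) (by omega) gad
    rw [e2, ← e1, Finset.inter_comm]
  -- sunflower contradiction
  exfalso
  set K := a ∩ b with hK
  have hKa : K ⊆ a := Finset.inter_subset_left
  have hKb : K ⊆ b := Finset.inter_subset_right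
  have hKc : K ⊆ c := by rw [← hbcK]; exact Finset.inter_subset_right
  have hKd : K ⊆ d := by rw [← hcdK]; exact Finset.inter_subset_right
  have dab : Disjoint (a \ K) (b \ K) := by
    rw [Finset.disjoint_left]
    intro t ht1 ht2
    rw [Finset.mem_sdiff] at ht1 ht2
    exact ht1.2 (Finset.mem_inter.2 ⟨ht1.1, ht2.1⟩)
  have dac : Disjoint (a \ K) (c \ K) := by
    rw [Finset.disjoint_left]
    intro t ht1 ht2
    rw [Finset.mem_sdiff] at ht1 ht2
    exact ht1.2 (hacK ▸ Finset.mem_inter.2 ⟨ht1.1, ht2.1⟩)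
  have dad : Disjoint (a \ K) (d \ K) := by
    rw [Finset.disjoint_left]
    intro t ht1 ht2
    rw [Finset.mem_sdiff] at ht1 ht2
    exact ht1.2 (hadK ▸ Finset.mem_inter.2 ⟨ht1.1, ht2.1⟩)
  have dbc : Disjoint (b \ K) (c \ K) := by
    rw [Finset.disjoint_left]
    intro t ht1 ht2
    rw [Finset.mem_sdiff] at ht1 ht2
    exact ht1.2 (hbcK ▸ Finset.mem_inter.2 ⟨ht1.1, ht2.1⟩)
  have dbd : Disjoint (b \ K) (d \ K) := by
    rw [Finset.disjoint_left]
    intro t ht1 ht2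
    rw [Finset.mem_sdiff] at ht1 ht2
    exact ht1.2 (hbdK ▸ Finset.mem_inter.2 ⟨ht1.1, ht2.1⟩)
  have dcd : Disjoint (c \ K) (d \ K) := by
    rw [Finset.disjoint_left]
    intro t ht1 ht2
    rw [Finset.mem_sdiff] at ht1 ht2
    exact ht1.2 (hcdK ▸ Finset.mem_inter.2 ⟨ht1.1, ht2.1⟩)
  have cKa : (a \ K).card + K.card = a.card := Finset.card_sdiff_add_card_eq_card hKa
  have cKb : (b \ K).card + K.card = b.card := Finset.card_sdiff_add_card_eq_card hKb
  have cKc : (c \ K).card + K.card = c.card := Finset.card_sdiff_add_card_eq_card hKc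
  have cKd : (d \ K).card + K.card = d.card := Finset.card_sdiff_add_card_eq_card hKd
  have dK1 : Disjoint K (a \ K) := Finset.disjoint_sdiff
  have dK2 : Disjoint K (b \ K) := Finset.disjoint_sdiff
  have dK3 : Disjoint K (c \ K) := Finset.disjoint_sdiff
  have dK4 : Disjoint K (d \ K) := Finset.disjoint_sdiff
  have c1 : (K ∪ (a \ K)).card = K.card + (a \ K).card := Finset.card_union_of_disjoint dK1
  have c2 : ((K ∪ (a \ K)) ∪ (b \ K)).card = (K ∪ (a \ K)).card + (b \ K).card :=
    Finset.card_union_of_disjoint (Finset.disjoint_union_left.2 ⟨dK2, dab⟩)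
  have c3 : (((K ∪ (a \ K)) ∪ (b \ K)) ∪ (c \ K)).card
      = ((K ∪ (a \ K)) ∪ (b \ K)).card + (c \ K).card :=
    Finset.card_union_of_disjoint
      (Finset.disjoint_union_left.2 ⟨Finset.disjoint_union_left.2 ⟨dK3, dac⟩, dbc⟩)
  have c4 : ((((K ∪ (a \ K)) ∪ (b \ K)) ∪ (c \ K)) ∪ (d \ K)).card
      = (((K ∪ (a \ K)) ∪ (b \ K)) ∪ (c \ K)).card + (d \ K).card :=
    Finset.card_union_of_disjoint
      (Finset.disjoint_union_left.2 ⟨Finset.disjoint_union_left.2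
        ⟨Finset.disjoint_union_left.2 ⟨dK4, dad⟩, dbd⟩, dcd⟩)
  have hle : ((((K ∪ (a \ K)) ∪ (b \ K)) ∪ (c \ K)) ∪ (d \ K)).card ≤ n := by
    simpa using Finset.card_le_univ ((((K ∪ (a \ K)) ∪ (b \ K)) ∪ (c \ K)) ∪ (d \ K))
  omega

lemma L3core {E : Finset (Finset (Fin n))} (hr : 4 ≤ r) (hn2 : n ≤ r + 4)
    {A' A'' B' B'' e : Finset (Fin n)}
    (hmA : A' ∈ E) (hmA2 : A'' ∈ E) (hmB : B' ∈ E) (hmB2 : B'' ∈ E) (hme : e ∈ E)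
    (d1 : A' ≠ A'') (d2 : A' ≠ B') (d3 : A' ≠ B'') (d4 : A' ≠ e)
    (d5 : A'' ≠ B') (d6 : A'' ≠ B'') (d7 : A'' ≠ e)
    (d8 : B' ≠ B'') (d9 : B' ≠ e) (d10 : B'' ≠ e)
    (cA : A'.card = r) (cA2 : A''.card = r) (cB : B'.card = r) (cB2 : B''.card = r)
    (ce : e.card = r)
    (hbadA : (A' ∩ A'').card ≤ 1) (hbadB : (B' ∩ B'').card ≤ 1)
    (h2A : 2 ≤ (e ∩ A').card) (h2B : 2 ≤ (e ∩ B').card) :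
    HasBergePath E 4 := by
  have h2A' : 2 ≤ (A' ∩ e).card := by rwa [Finset.inter_comm]
  -- choose P with (P ∩ A') nonempty
  have hP : ∃ P, P ∈ E ∧ P ≠ A' ∧ P ≠ e ∧ P ≠ B' ∧ P.card = r ∧ (P ∩ A').Nonempty := by
    by_cases hAA : (A'' ∩ A').Nonempty
    · exact ⟨A'', hmA2, d1.symm, d7, d5, cA2, hAA⟩
    · refine ⟨B'', hmB2, d3.symm, d10, d8.symm, cB2, ?_⟩
      by_contra hBB
      rw [Finset.not_nonempty_iff_eq_empty] at hAA hBB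
      have key : ∀ X : Finset (Fin n), X.card = r → X ∩ A' = ∅ → X = Finset.univ \ A' := by
        intro X hX hXA
        have hsub : X ⊆ Finset.univ \ A' := by
          rw [Finset.subset_sdiff]
          exact ⟨Finset.subset_univ _, Finset.disjoint_iff_inter_eq_empty.2 hXA⟩
        have hcard : (Finset.univ \ A').card ≤ X.card := by
          have h1 : (Finset.univ \ A').card + A'.card = n := by
            have := Finset.card_sdiff_add_card_eq_card (Finset.subset_univ A')
            simpa using this
          omega
        exact (Finset.eq_of_subset_of_card_le hsub hcard)
      exact d6 ((key A'' cA2 hAA).trans (key B'' cB2 hBB).symm)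
  obtain ⟨P, hmP, hPA', hPe, hPB', cP, hPA⟩ := hP
  by_cases hU : 3 ≤ ((A' ∩ e) ∪ (e ∩ B') ∪ (P ∩ A')).card
  · obtain ⟨x, hx, y, hy, z, hz, hxy, hxz, hyz⟩ := sdr3 h2A' h2B hPA hU
    -- quad (P, A', e, B') with v2 := z, v3 := x, v4 := y
    exact pathM hr hmP hmA hme hmB hPA' hPe hPB' d4 d2 (fun h => d9 h.symm) cP cB
      hz hx hy (fun h => hxz h.symm) (fun h => hyz h.symm) hxy
  push_neg at hU
  have hS1 : A' ∩ e = (A' ∩ e) ∪ (e ∩ B') ∪ (P ∩ A') :=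
    eqU (Finset.subset_union_left.trans Finset.subset_union_left) (by omega) h2A'
  have hS2 : e ∩ B' = (A' ∩ e) ∪ (e ∩ B') ∪ (P ∩ A') :=
    eqU (Finset.subset_union_right.trans Finset.subset_union_left) (by omega) h2B
  have hSe : e ∩ B' = A' ∩ e := by rw [hS2, ← hS1]
  have hScard : (A' ∩ e).card = 2 := by
    have h1 : (A' ∩ e).card ≤ ((A' ∩ e) ∪ (e ∩ B') ∪ (P ∩ A')).card :=
      Finset.card_le_card (Finset.subset_union_left.trans Finset.subset_union_left)
    omega
  have hSsubE : A' ∩ e ⊆ e := Finset.inter_subset_right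
  have hSsubA : A' ∩ e ⊆ A' := Finset.inter_subset_left
  have hSsubB : A' ∩ e ⊆ B' := by rw [← hSe]; exact Finset.inter_subset_right
  -- find q ∈ (e \ (A' ∩ e)) ∩ A''
  have hq : ((e \ (A' ∩ e)) ∩ A'').Nonempty := by
    rw [← Finset.card_pos]
    have h1 : ((e \ (A' ∩ e)) ∩ A'').card + ((e \ (A' ∩ e)) \ A'').card = (e \ (A' ∩ e)).card :=
      Finset.card_inter_add_card_sdiff _ _
    have h2 : (e \ (A' ∩ e)).card + (A' ∩ e).card = e.card := Finset.card_sdiff_add_card_eq_card hSsubE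
    have h3 : (e \ (A' ∩ e)) \ A'' ⊆ Finset.univ \ (A' ∪ A'') := by
      intro t ht
      rw [Finset.mem_sdiff] at ht
      obtain ⟨ht1, ht2⟩ := ht
      rw [Finset.mem_sdiff] at ht1
      rw [Finset.mem_sdiff, Finset.mem_union]
      refine ⟨Finset.mem_univ _, ?_⟩
      rintro (h' | h')
      · exact ht1.2 (Finset.mem_inter.2 ⟨h', ht1.1⟩)
      · exact ht2 h'
    have h4 : ((e \ (A' ∩ e)) \ A'').card ≤ (Finset.univ \ (A' ∪ A'')).card := Finset.card_le_card h3
    have h5 : (Finset.univ \ (A' ∪ A'')).card + (A' ∪ A'').card = n := by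
      have := Finset.card_sdiff_add_card_eq_card (Finset.subset_univ (A' ∪ A''))
      simpa using this
    have h6 : (A' ∪ A'').card + (A' ∩ A'').card = A'.card + A''.card :=
      Finset.card_union_add_card_inter _ _
    omega
  obtain ⟨q, hq⟩ := hq
  rw [Finset.mem_inter, Finset.mem_sdiff] at hq
  obtain ⟨⟨hqe, hqS⟩, hqA2⟩ := hq
  -- final SDR on (A' ∩ B', B' ∩ e, e ∩ A'')
  have hX : 2 ≤ (A' ∩ B').card := by
    have := Finset.card_le_card (Finset.subset_inter hSsubA hSsubB)
    omega
  have hY : 2 ≤ (B' ∩ e).card := by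
    rw [Finset.inter_comm, hSe]; omega
  have hZ : (e ∩ A'').Nonempty := ⟨q, Finset.mem_inter.2 ⟨hqe, hqA2⟩⟩
  have hU2 : 3 ≤ ((A' ∩ B') ∪ (B' ∩ e) ∪ (e ∩ A'')).card := by
    have hsub : insert q (A' ∩ e) ⊆ (A' ∩ B') ∪ (B' ∩ e) ∪ (e ∩ A'') := by
      intro t ht
      rw [Finset.mem_insert] at ht
      rcases ht with h' | h'
      · subst h'
        exact Finset.mem_union_right _ (Finset.mem_inter.2 ⟨hqe, hqA2⟩)
      · exact Finset.mem_union_left _ (Finset.mem_union_left _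
          (Finset.subset_inter hSsubA hSsubB h'))
    have hc3 : (insert q (A' ∩ e)).card = 3 := by
      rw [Finset.card_insert_of_notMem hqS, hScard]
    have := Finset.card_le_card hsub
    omega
  obtain ⟨x, hx, y, hy, z, hz, hxy, hxz, hyz⟩ := sdr3 hX hY hZ hU2
  -- quad (A', B', e, A'') with v2 := x, v3 := y, v4 := z
  exact pathM hr hmA hmB hme hmA2 d2 d4 d1 d9 (fun h => d5 h.symm) (fun h => d7 h.symm)
    cA cA2 hx hy hz hxy hxz hyz

lemma L3 {E : Finset (Finset (Fin n))} (hr : 4 ≤ r) (hn2 : n ≤ r + 4)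
    {A D B C e : Finset (Fin n)}
    (hmA : A ∈ E) (hmD : D ∈ E) (hmB : B ∈ E) (hmC : C ∈ E) (hme : e ∈ E)
    (d1 : A ≠ D) (d2 : A ≠ B) (d3 : A ≠ C) (d4 : A ≠ e)
    (d5 : D ≠ B) (d6 : D ≠ C) (d7 : D ≠ e)
    (d8 : B ≠ C) (d9 : B ≠ e) (d10 : C ≠ e)
    (cA : A.card = r) (cD : D.card = r) (cB : B.card = r) (cC : C.card = r)
    (ce : e.card = r)
    (hbAD : (A ∩ D).card ≤ 1) (hbBC : (B ∩ C).card ≤ 1) :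
    HasBergePath E 4 := by
  have sumA : 3 ≤ (e ∩ A).card + (e ∩ D).card := by
    have h1 := Finset.card_union_add_card_inter A D
    have h2 := card_inter_ge e (A ∪ D)
    have h3 : e ∩ (A ∪ D) = (e ∩ A) ∪ (e ∩ D) := Finset.inter_union_distrib_left e A D
    have h4 : (e ∩ (A ∪ D)).card ≤ (e ∩ A).card + (e ∩ D).card := by
      rw [h3]; exact Finset.card_union_le _ _
    omega
  have sumB : 3 ≤ (e ∩ B).card + (e ∩ C).card := by
    have h1 := Finset.card_union_add_card_inter B C
    have h2 := card_inter_ge e (B ∪ C)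
    have h3 : e ∩ (B ∪ C) = (e ∩ B) ∪ (e ∩ C) := Finset.inter_union_distrib_left e B C
    have h4 : (e ∩ (B ∪ C)).card ≤ (e ∩ B).card + (e ∩ C).card := by
      rw [h3]; exact Finset.card_union_le _ _
    omega
  have hbDA : (D ∩ A).card ≤ 1 := by rwa [Finset.inter_comm]
  have hbCB : (C ∩ B).card ≤ 1 := by rwa [Finset.inter_comm]
  by_cases hA : 2 ≤ (e ∩ A).card
  · by_cases hB : 2 ≤ (e ∩ B).card
    · exact L3core hr hn2 hmA hmD hmB hmC hme d1 d2 d3 d4 d5 d6 d7 d8 d9 d10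
        cA cD cB cC ce hbAD hbBC hA hB
    · have hC : 2 ≤ (e ∩ C).card := by omega
      exact L3core hr hn2 hmA hmD hmC hmB hme d1 d3 d2 d4 d6 d5 d7 d8.symm d10 d9
        cA cD cC cB ce hbAD hbCB hA hC
  · have hD : 2 ≤ (e ∩ D).card := by omega
    by_cases hB : 2 ≤ (e ∩ B).card
    · exact L3core hr hn2 hmD hmA hmB hmC hme d1.symm d5 d6 d7 d2 d3 d4 d8 d9 d10
        cD cA cB cC ce hbDA hbBC hD hB
    · have hC : 2 ≤ (e ∩ C).card := by omega
      exact L3core hr hn2 hmD hmA hmC hmB hme d1.symm d6 d5 d7 d3 d2 d4 d8.symm d10 d9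
        cD cA cC cB ce hbDA hbCB hD hC

set_option synthInstance.maxSize 2000 in
set_option synthInstance.maxHeartbeats 1000000 in
set_option maxHeartbeats 1000000 in
lemma sel (b12 b13 b14 b15 b23 b24 b25 b34 b35 b45 : Bool)
    (h123 : ¬(b12 ∧ b13 ∧ b23)) (h124 : ¬(b12 ∧ b14 ∧ b24))
    (h125 : ¬(b12 ∧ b15 ∧ b25)) (h134 : ¬(b13 ∧ b14 ∧ b34))
    (h135 : ¬(b13 ∧ b15 ∧ b35)) (h145 : ¬(b14 ∧ b15 ∧ b45))
    (h234 : ¬(b23 ∧ b24 ∧ b34)) (h235 : ¬(b23 ∧ b25 ∧ b35))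
    (h245 : ¬(b24 ∧ b25 ∧ b45)) (h345 : ¬(b34 ∧ b35 ∧ b45)) :
    (¬b12 ∧ ¬b13 ∧ ¬b14 ∧ ¬b23 ∧ ¬b24 ∧ ¬b34) ∨
    (¬b12 ∧ ¬b13 ∧ ¬b15 ∧ ¬b23 ∧ ¬b25 ∧ ¬b35) ∨
    (¬b12 ∧ ¬b14 ∧ ¬b15 ∧ ¬b24 ∧ ¬b25 ∧ ¬b45) ∨
    (¬b13 ∧ ¬b14 ∧ ¬b15 ∧ ¬b34 ∧ ¬b35 ∧ ¬b45) ∨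
    (¬b23 ∧ ¬b24 ∧ ¬b25 ∧ ¬b34 ∧ ¬b35 ∧ ¬b45) ∨
    (b12 ∧ b34) ∨ (b12 ∧ b35) ∨ (b12 ∧ b45) ∨
    (b13 ∧ b24) ∨ (b13 ∧ b25) ∨ (b13 ∧ b45) ∨
    (b14 ∧ b23) ∨ (b14 ∧ b25) ∨ (b14 ∧ b35) ∨
    (b15 ∧ b23) ∨ (b15 ∧ b24) ∨ (b15 ∧ b34) ∨
    (b23 ∧ b45) ∨ (b24 ∧ b35) ∨ (b25 ∧ b34) := by
  revert h123 h124 h125 h134 h135 h145 h234 h235 h245 h345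
  revert b12 b13 b14 b15 b23 b24 b25 b34 b35 b45
  decide

lemma five {E : Finset (Finset (Fin n))} (hr : 4 ≤ r) (hn2 : n ≤ r + 4)
    {x1 x2 x3 x4 x5 : Finset (Fin n)}
    (hm1 : x1 ∈ E) (hm2 : x2 ∈ E) (hm3 : x3 ∈ E) (hm4 : x4 ∈ E) (hm5 : x5 ∈ E)
    (d12 : x1 ≠ x2) (d13 : x1 ≠ x3) (d14 : x1 ≠ x4) (d15 : x1 ≠ x5)
    (d23 : x2 ≠ x3) (d24 : x2 ≠ x4) (d25 : x2 ≠ x5)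
    (d34 : x3 ≠ x4) (d35 : x3 ≠ x5) (d45 : x4 ≠ x5)
    (c1 : x1.card = r) (c2 : x2.card = r) (c3 : x3.card = r) (c4 : x4.card = r)
    (c5 : x5.card = r) :
    HasBergePath E 4 := by
  classical
  have toBad : ∀ {x y : Finset (Fin n)}, (decide ((x ∩ y).card ≤ 1) = true) → (x ∩ y).card ≤ 1 :=
    fun h => of_decide_eq_true h
  have toGood : ∀ {x y : Finset (Fin n)}, ¬(decide ((x ∩ y).card ≤ 1) = true) → 2 ≤ (x ∩ y).card := by
    intro x y h
    by_contra h2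
    exact h (decide_eq_true (by omega))
  have t123 : ¬((decide ((x1 ∩ x2).card ≤ 1) = true) ∧ (decide ((x1 ∩ x3).card ≤ 1) = true) ∧ (decide ((x2 ∩ x3).card ≤ 1) = true)) := by
    rintro ⟨u1, u2, u3⟩
    exact triFalse hr hn2 c1 c2 c3 (toBad u1) (toBad u2) (toBad u3)
  have t124 : ¬((decide ((x1 ∩ x2).card ≤ 1) = true) ∧ (decide ((x1 ∩ x4).card ≤ 1) = true) ∧ (decide ((x2 ∩ x4).card ≤ 1) = true)) := by
    rintro ⟨u1, u2, u3⟩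
    exact triFalse hr hn2 c1 c2 c4 (toBad u1) (toBad u2) (toBad u3)
  have t125 : ¬((decide ((x1 ∩ x2).card ≤ 1) = true) ∧ (decide ((x1 ∩ x5).card ≤ 1) = true) ∧ (decide ((x2 ∩ x5).card ≤ 1) = true)) := by
    rintro ⟨u1, u2, u3⟩
    exact triFalse hr hn2 c1 c2 c5 (toBad u1) (toBad u2) (toBad u3)
  have t134 : ¬((decide ((x1 ∩ x3).card ≤ 1) = true) ∧ (decide ((x1 ∩ x4).card ≤ 1) = true) ∧ (decide ((x3 ∩ x4).card ≤ 1) = true)) := by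
    rintro ⟨u1, u2, u3⟩
    exact triFalse hr hn2 c1 c3 c4 (toBad u1) (toBad u2) (toBad u3)
  have t135 : ¬((decide ((x1 ∩ x3).card ≤ 1) = true) ∧ (decide ((x1 ∩ x5).card ≤ 1) = true) ∧ (decide ((x3 ∩ x5).card ≤ 1) = true)) := by
    rintro ⟨u1, u2, u3⟩
    exact triFalse hr hn2 c1 c3 c5 (toBad u1) (toBad u2) (toBad u3)
  have t145 : ¬((decide ((x1 ∩ x4).card ≤ 1) = true) ∧ (decide ((x1 ∩ x5).card ≤ 1) = true) ∧ (decide ((x4 ∩ x5).card ≤ 1) = true)) := by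
    rintro ⟨u1, u2, u3⟩
    exact triFalse hr hn2 c1 c4 c5 (toBad u1) (toBad u2) (toBad u3)
  have t234 : ¬((decide ((x2 ∩ x3).card ≤ 1) = true) ∧ (decide ((x2 ∩ x4).card ≤ 1) = true) ∧ (decide ((x3 ∩ x4).card ≤ 1) = true)) := by
    rintro ⟨u1, u2, u3⟩
    exact triFalse hr hn2 c2 c3 c4 (toBad u1) (toBad u2) (toBad u3)
  have t235 : ¬((decide ((x2 ∩ x3).card ≤ 1) = true) ∧ (decide ((x2 ∩ x5).card ≤ 1) = true) ∧ (decide ((x3 ∩ x5).card ≤ 1) = true)) := by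
    rintro ⟨u1, u2, u3⟩
    exact triFalse hr hn2 c2 c3 c5 (toBad u1) (toBad u2) (toBad u3)
  have t245 : ¬((decide ((x2 ∩ x4).card ≤ 1) = true) ∧ (decide ((x2 ∩ x5).card ≤ 1) = true) ∧ (decide ((x4 ∩ x5).card ≤ 1) = true)) := by
    rintro ⟨u1, u2, u3⟩
    exact triFalse hr hn2 c2 c4 c5 (toBad u1) (toBad u2) (toBad u3)
  have t345 : ¬((decide ((x3 ∩ x4).card ≤ 1) = true) ∧ (decide ((x3 ∩ x5).card ≤ 1) = true) ∧ (decide ((x4 ∩ x5).card ≤ 1) = true)) := by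
    rintro ⟨u1, u2, u3⟩
    exact triFalse hr hn2 c3 c4 c5 (toBad u1) (toBad u2) (toBad u3)
  have H := sel (decide ((x1 ∩ x2).card ≤ 1)) (decide ((x1 ∩ x3).card ≤ 1)) (decide ((x1 ∩ x4).card ≤ 1)) (decide ((x1 ∩ x5).card ≤ 1)) (decide ((x2 ∩ x3).card ≤ 1)) (decide ((x2 ∩ x4).card ≤ 1)) (decide ((x2 ∩ x5).card ≤ 1)) (decide ((x3 ∩ x4).card ≤ 1)) (decide ((x3 ∩ x5).card ≤ 1)) (decide ((x4 ∩ x5).card ≤ 1)) t123 t124 t125 t134 t135 t145 t234 t235 t245 t345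
  rcases H with ⟨g12, g13, g14, g23, g24, g34⟩ | ⟨g12, g13, g15, g23, g25, g35⟩ | ⟨g12, g14, g15, g24, g25, g45⟩ | ⟨g13, g14, g15, g34, g35, g45⟩ | ⟨g23, g24, g25, g34, g35, g45⟩ | ⟨m1, m2⟩ | ⟨m1, m2⟩ | ⟨m1, m2⟩ | ⟨m1, m2⟩ | ⟨m1, m2⟩ | ⟨m1, m2⟩ | ⟨m1, m2⟩ | ⟨m1, m2⟩ | ⟨m1, m2⟩ | ⟨m1, m2⟩ | ⟨m1, m2⟩ | ⟨m1, m2⟩ | ⟨m1, m2⟩ | ⟨m1, m2⟩ | ⟨m1, m2⟩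
  · exact L2 hr hn2 hm1 hm2 hm3 hm4 d12 d13 d14 d23 d24 d34 c1 c2 c3 c4 (toGood g12) (toGood g13) (toGood g14) (toGood g23) (toGood g24) (toGood g34)
  · exact L2 hr hn2 hm1 hm2 hm3 hm5 d12 d13 d15 d23 d25 d35 c1 c2 c3 c5 (toGood g12) (toGood g13) (toGood g15) (toGood g23) (toGood g25) (toGood g35)
  · exact L2 hr hn2 hm1 hm2 hm4 hm5 d12 d14 d15 d24 d25 d45 c1 c2 c4 c5 (toGood g12) (toGood g14) (toGood g15) (toGood g24) (toGood g25) (toGood g45)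
  · exact L2 hr hn2 hm1 hm3 hm4 hm5 d13 d14 d15 d34 d35 d45 c1 c3 c4 c5 (toGood g13) (toGood g14) (toGood g15) (toGood g34) (toGood g35) (toGood g45)
  · exact L2 hr hn2 hm2 hm3 hm4 hm5 d23 d24 d25 d34 d35 d45 c2 c3 c4 c5 (toGood g23) (toGood g24) (toGood g25) (toGood g34) (toGood g35) (toGood g45)
  · exact L3 hr hn2 hm1 hm2 hm3 hm4 hm5 d12 d13 d14 d15 d23 d24 d25 d34 d35 d45 c1 c2 c3 c4 c5 (toBad m1) (toBad m2)
  · exact L3 hr hn2 hm1 hm2 hm3 hm5 hm4 d12 d13 d15 d14 d23 d25 d24 d35 d34 d45.symm c1 c2 c3 c5 c4 (toBad m1) (toBad m2)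
  · exact L3 hr hn2 hm1 hm2 hm4 hm5 hm3 d12 d14 d15 d13 d24 d25 d23 d45 d34.symm d35.symm c1 c2 c4 c5 c3 (toBad m1) (toBad m2)
  · exact L3 hr hn2 hm1 hm3 hm2 hm4 hm5 d13 d12 d14 d15 d23.symm d34 d35 d24 d25 d45 c1 c3 c2 c4 c5 (toBad m1) (toBad m2)
  · exact L3 hr hn2 hm1 hm3 hm2 hm5 hm4 d13 d12 d15 d14 d23.symm d35 d34 d25 d24 d45.symm c1 c3 c2 c5 c4 (toBad m1) (toBad m2)
  · exact L3 hr hn2 hm1 hm3 hm4 hm5 hm2 d13 d14 d15 d12 d34 d35 d23.symm d45 d24.symm d25.symm c1 c3 c4 c5 c2 (toBad m1) (toBad m2)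
  · exact L3 hr hn2 hm1 hm4 hm2 hm3 hm5 d14 d12 d13 d15 d24.symm d34.symm d45 d23 d25 d35 c1 c4 c2 c3 c5 (toBad m1) (toBad m2)
  · exact L3 hr hn2 hm1 hm4 hm2 hm5 hm3 d14 d12 d15 d13 d24.symm d45 d34.symm d25 d23 d35.symm c1 c4 c2 c5 c3 (toBad m1) (toBad m2)
  · exact L3 hr hn2 hm1 hm4 hm3 hm5 hm2 d14 d13 d15 d12 d34.symm d45 d24.symm d35 d23.symm d25.symm c1 c4 c3 c5 c2 (toBad m1) (toBad m2)
  · exact L3 hr hn2 hm1 hm5 hm2 hm3 hm4 d15 d12 d13 d14 d25.symm d35.symm d45.symm d23 d24 d34 c1 c5 c2 c3 c4 (toBad m1) (toBad m2)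
  · exact L3 hr hn2 hm1 hm5 hm2 hm4 hm3 d15 d12 d14 d13 d25.symm d45.symm d35.symm d24 d23 d34.symm c1 c5 c2 c4 c3 (toBad m1) (toBad m2)
  · exact L3 hr hn2 hm1 hm5 hm3 hm4 hm2 d15 d13 d14 d12 d35.symm d45.symm d25.symm d34 d23.symm d24.symm c1 c5 c3 c4 c2 (toBad m1) (toBad m2)
  · exact L3 hr hn2 hm2 hm3 hm4 hm5 hm1 d23 d24 d25 d12.symm d34 d35 d13.symm d45 d14.symm d15.symm c2 c3 c4 c5 c1 (toBad m1) (toBad m2)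
  · exact L3 hr hn2 hm2 hm4 hm3 hm5 hm1 d24 d23 d25 d12.symm d34.symm d45 d14.symm d35 d13.symm d15.symm c2 c4 c3 c5 c1 (toBad m1) (toBad m2)
  · exact L3 hr hn2 hm2 hm5 hm3 hm4 hm1 d25 d23 d24 d12.symm d35.symm d45.symm d15.symm d34 d13.symm d14.symm c2 c5 c3 c4 c1 (toBad m1) (toBad m2)


theorem stmt3 (r n : ℕ) (hr : 4 ≤ r) (hn1 : r ≤ n) (hn2 : n ≤ r + 4)
    (E : Finset (Finset (Fin n))) (hu : Uniform E r) (hc : Connected E)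
    (hf : BPFree E 4) : E.card ≤ 4 := by
  by_contra hE
  push_neg at hE
  have h5 : 5 ≤ E.card := hE
  obtain ⟨x1, hm1⟩ := Finset.card_pos.mp (show 0 < E.card by omega)
  have hc1 : 4 ≤ (E.erase x1).card := by rw [Finset.card_erase_of_mem hm1]; omega
  obtain ⟨x2, hm2'⟩ := Finset.card_pos.mp (show 0 < (E.erase x1).card by omega)
  have hm2 : x2 ∈ E := Finset.mem_of_mem_erase hm2'
  have e21 : x2 ≠ x1 := Finset.ne_of_mem_erase hm2'
  have hc2 : 3 ≤ ((E.erase x1).erase x2).card := by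
    rw [Finset.card_erase_of_mem hm2']; omega
  obtain ⟨x3, hm3'⟩ := Finset.card_pos.mp (show 0 < ((E.erase x1).erase x2).card by omega)
  have e32 : x3 ≠ x2 := Finset.ne_of_mem_erase hm3'
  have hm3a : x3 ∈ E.erase x1 := Finset.mem_of_mem_erase hm3'
  have e31 : x3 ≠ x1 := Finset.ne_of_mem_erase hm3a
  have hm3 : x3 ∈ E := Finset.mem_of_mem_erase hm3a
  have hc3 : 2 ≤ (((E.erase x1).erase x2).erase x3).card := by
    rw [Finset.card_erase_of_mem hm3']; omega
  obtain ⟨x4, hm4'⟩ := Finset.card_pos.mp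
    (show 0 < (((E.erase x1).erase x2).erase x3).card by omega)
  have e43 : x4 ≠ x3 := Finset.ne_of_mem_erase hm4'
  have hm4a : x4 ∈ (E.erase x1).erase x2 := Finset.mem_of_mem_erase hm4'
  have e42 : x4 ≠ x2 := Finset.ne_of_mem_erase hm4a
  have hm4b : x4 ∈ E.erase x1 := Finset.mem_of_mem_erase hm4a
  have e41 : x4 ≠ x1 := Finset.ne_of_mem_erase hm4b
  have hm4 : x4 ∈ E := Finset.mem_of_mem_erase hm4b
  have hc4 : 1 ≤ ((((E.erase x1).erase x2).erase x3).erase x4).card := by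
    rw [Finset.card_erase_of_mem hm4']; omega
  obtain ⟨x5, hm5'⟩ := Finset.card_pos.mp
    (show 0 < ((((E.erase x1).erase x2).erase x3).erase x4).card by omega)
  have e54 : x5 ≠ x4 := Finset.ne_of_mem_erase hm5'
  have hm5a : x5 ∈ ((E.erase x1).erase x2).erase x3 := Finset.mem_of_mem_erase hm5'
  have e53 : x5 ≠ x3 := Finset.ne_of_mem_erase hm5a
  have hm5b : x5 ∈ (E.erase x1).erase x2 := Finset.mem_of_mem_erase hm5a
  have e52 : x5 ≠ x2 := Finset.ne_of_mem_erase hm5b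
  have hm5c : x5 ∈ E.erase x1 := Finset.mem_of_mem_erase hm5b
  have e51 : x5 ≠ x1 := Finset.ne_of_mem_erase hm5c
  have hm5 : x5 ∈ E := Finset.mem_of_mem_erase hm5c
  exact hf (five hr hn2 hm1 hm2 hm3 hm4 hm5
    e21.symm e31.symm e41.symm e51.symm e32.symm e42.symm e52.symm e43.symm e53.symm e54.symm
    (hu x1 hm1) (hu x2 hm2) (hu x3 hm3) (hu x4 hm4) (hu x5 hm5))

end Berge
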